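/- Let λ₂, λ₃ ∈ ℂ with λ₂ ≠ λ₃, Re(λ₃) ≥ Re(λ₂), and Re(λ₃) > 0. Then the function t ↦ λ₃·e^{λ₃ t} − λ₂·e^{λ₂ t} is unbounded on [0,∞), i.e. sup_{t ≥ 0} |λ₃·e^{λ₃ t} − λ₂·e^{λ₂ t}| = ∞. -/

import Mathlib

open Filter Complex

lemma abs_g_eq (l2 l3 : ℂ) (t : ℝ) :
    ‖l3 * Complex.exp (l3 * t) - l2 * Complex.exp (l2 * t)‖ =
      Real.exp (l2.re * t) * ‖l3 * Complex.exp ((l3 - l2) * t) - l2‖ := by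
  have h : l3 * Complex.exp (l3 * t) - l2 * Complex.exp (l2 * t)
      = Complex.exp (l2 * t) * (l3 * Complex.exp ((l3 - l2) * t) - l2) := by
    rw [mul_sub, ← mul_assoc, mul_comm (Complex.exp (l2*t)) l3, mul_assoc,
      ← Complex.exp_add]
    ring_nf
  rw [h, norm_mul, Complex.norm_exp]
  norm_num [Complex.mul_re]

theorem exp_combination_unbounded
    (l2 l3 : ℂ) (hne : l2 ≠ l3) (hre : l2.re ≤ l3.re) (hpos : 0 < l3.re) :
    ∀ M : ℝ, ∃ t : ℝ, 0 ≤ t ∧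
      M < ‖l3 * Complex.exp (l3 * t) - l2 * Complex.exp (l2 * t)‖ := by
  intro M
  have habs3 : 0 < ‖l3‖ := by
    have : l3 ≠ 0 := by intro h; rw [h] at hpos; simp at hpos
    exact norm_pos_iff.mpr this
  rcases lt_or_eq_of_le hre with hlt | heq
  · -- Case A : l2.re < l3.re
    set F : ℝ → ℝ := fun t =>
      Real.exp (l3.re * t) * (‖l3‖ - ‖l2‖ * Real.exp ((l2.re - l3.re) * t))
      with hF
    have h1 : Tendsto (fun t : ℝ => Real.exp (l3.re * t)) atTop atTop :=
      Real.tendsto_exp_atTop.comp (Tendsto.const_mul_atTop hpos tendsto_id)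
    have h2 : Tendsto (fun t : ℝ => ‖l3‖ - ‖l2‖ * Real.exp ((l2.re - l3.re) * t))
        atTop (nhds (‖l3‖)) := by
      have h3 : Tendsto (fun t : ℝ => Real.exp ((l2.re - l3.re) * t)) atTop (nhds 0) :=
        Real.tendsto_exp_atBot.comp (tendsto_id.const_mul_atTop_of_neg (by linarith))
      have h4 : Tendsto (fun t : ℝ => ‖l2‖ * Real.exp ((l2.re - l3.re) * t))
          atTop (nhds (‖l2‖ * 0)) := h3.const_mul _
      have h5 : Tendsto (fun _ : ℝ => ‖l3‖) atTop (nhds (‖l3‖)) :=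
        tendsto_const_nhds
      simpa using h5.sub h4
    have hFtop : Tendsto F atTop atTop := Tendsto.atTop_mul_pos habs3 h1 h2
    obtain ⟨t, ht0, htM⟩ := ((eventually_ge_atTop (0:ℝ)).and (hFtop.eventually_gt_atTop M)).exists
    refine ⟨t, ht0, ?_⟩
    have hexp : Real.exp (l3.re * t) * Real.exp ((l2.re - l3.re) * t) = Real.exp (l2.re * t) := by
      rw [← Real.exp_add]; ring_nf
    have hFle : F t ≤ ‖l3 * Complex.exp (l3 * t) - l2 * Complex.exp (l2 * t)‖ := by
      have hlow : ‖l3 * Complex.exp (l3 * t)‖ - ‖l2 * Complex.exp (l2 * t)‖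
          ≤ ‖l3 * Complex.exp (l3 * t) - l2 * Complex.exp (l2 * t)‖ := by
        simpa using
          norm_sub_norm_le (l3 * Complex.exp (l3 * t)) (l2 * Complex.exp (l2 * t))
      have e1 : ‖l3 * Complex.exp (l3 * t)‖ = ‖l3‖ * Real.exp (l3.re * t) := by
        rw [norm_mul, Complex.norm_exp]; norm_num [Complex.mul_re]
      have e2 : ‖l2 * Complex.exp (l2 * t)‖ = ‖l2‖ * Real.exp (l2.re * t) := by
        rw [norm_mul, Complex.norm_exp]; norm_num [Complex.mul_re]
      have : F t = ‖l3‖ * Real.exp (l3.re * t) - ‖l2‖ * Real.exp (l2.re * t) := by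
        rw [hF]; dsimp only; rw [mul_sub, ← hexp]; ring
      rw [this, ← e1, ← e2]; exact hlow
    linarith
  · -- Case B : l2.re = l3.re
    have hl2pos : 0 < l2.re := by rw [heq]; exact hpos
    set ω := l3.im - l2.im with hω
    have hωne : ω ≠ 0 := by
      intro h
      apply hne
      apply Complex.ext heq (by linarith [sub_eq_zero.mp h])
    have hdiff : l3 - l2 = (ω : ℂ) * Complex.I := by
      apply Complex.ext <;> simp [hω, heq]
    set s := Real.pi / |ω| with hs
    have hspos : 0 < s := div_pos Real.pi_pos (abs_pos.mpr hωne)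
    have hcast : ((ω : ℂ) * Complex.I) * (s : ℂ) = ((ω * s : ℝ) : ℂ) * Complex.I := by
      push_cast; ring
    have hes : Complex.exp ((l3 - l2) * s) = -1 := by
      rw [hdiff, hcast]
      rcases lt_or_gt_of_ne hωne with hneg | hpos'
      · have hωs : ω * s = -Real.pi := by
          rw [hs, abs_of_neg hneg, div_neg, mul_neg]; field_simp
        rw [hωs]
        push_cast
        rw [neg_mul, Complex.exp_neg, Complex.exp_pi_mul_I]; norm_num
      · have hωs : ω * s = Real.pi := by
          rw [hs, abs_of_pos hpos']; field_simp
        rw [hωs, Complex.exp_pi_mul_I]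
    -- pick t0
    have h1 : Tendsto (fun t : ℝ => Real.exp (l2.re * t) * ‖l3‖) atTop atTop :=
      Tendsto.atTop_mul_const habs3
        (Real.tendsto_exp_atTop.comp (Tendsto.const_mul_atTop hl2pos tendsto_id))
    obtain ⟨t0, ht0, htM⟩ := ((eventually_ge_atTop (0:ℝ)).and (h1.eventually_gt_atTop M)).exists
    set u : ℝ → ℂ := fun t => l3 * Complex.exp ((l3 - l2) * t) - l2 with hu
    have hre0 : ((l3 - l2) * (t0:ℂ)).re = 0 := by
      simp [Complex.mul_re, Complex.sub_re, heq]
    have hkey : 2 * ‖l3‖ ≤ ‖u t0‖ + ‖u (t0 + s)‖ := by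
      have hu1 : u (t0 + s) = -(l3 * Complex.exp ((l3 - l2) * t0)) - l2 := by
        rw [hu]; dsimp only
        push_cast
        rw [mul_add, Complex.exp_add, hes]
        ring
      have hd : u t0 - u (t0 + s) = 2 * (l3 * Complex.exp ((l3 - l2) * t0)) := by
        rw [hu1, hu]; ring
      have habs : ‖u t0 - u (t0 + s)‖ = 2 * ‖l3‖ := by
        rw [hd, norm_mul, norm_mul, Complex.norm_exp, hre0]
        simp
      calc 2 * ‖l3‖ = ‖u t0 - u (t0 + s)‖ := habs.symm
        _ ≤ ‖u t0‖ + ‖u (t0 + s)‖ := by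
            simpa using norm_sub_le (u t0) (u (t0 + s))
    rcases le_or_gt (‖l3‖) (‖u t0‖) with hc | hc
    · refine ⟨t0, ht0, ?_⟩
      rw [abs_g_eq]
      calc M < Real.exp (l2.re * t0) * ‖l3‖ := htM
        _ ≤ Real.exp (l2.re * t0) * ‖u t0‖ := by
            exact mul_le_mul_of_nonneg_left hc (Real.exp_pos _).le
    · refine ⟨t0 + s, by linarith, ?_⟩
      rw [abs_g_eq]
      have hc2 : ‖l3‖ ≤ ‖u (t0 + s)‖ := by linarith
      have hemono : Real.exp (l2.re * t0) ≤ Real.exp (l2.re * (t0 + s)) := by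
        apply Real.exp_le_exp.mpr
        nlinarith
      calc M < Real.exp (l2.re * t0) * ‖l3‖ := htM
        _ ≤ Real.exp (l2.re * (t0 + s)) * ‖u (t0 + s)‖ :=
            mul_le_mul hemono hc2 habs3.le (Real.exp_pos _).le
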